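/- arXiv:math/0607494 — 2 statements merged into one kernel-verified Lean document; each statement's English description precedes it below -/
import Mathlib

section
/- Assume D ≠ 0 and let p be a prime with p ∤ D. Then Σ μ(p)·μ(c₁)⋯μ(c_g)·ρ(c₁,…,c_g)/(c₁⋯c_g)² = (ρ(p,1,…,1) + ρ(1,p,1,…,1) + ⋯ + ρ(1,…,1,p) + 1 − g)/p², where the left-hand sum is over all g-tuples (c₁,…,c_g) of positive integers with c_i ∣ p for every i and p ∣ c₁⋯c_g, and μ denotes the Möbius function. -/
open Finset

/-- The binary quadratic form `q_i(x,y) = a_i x^2 + 2 b_i x y + c_i y^2`. -/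
def qf {g : ℕ} (a b c : Fin g → ℤ) (i : Fin g) (x : ℤ × ℤ) : ℤ :=
  a i * x.1 ^ 2 + 2 * b i * x.1 * x.2 + c i * x.2 ^ 2

/-- The resolvent of two binary quadratic forms. -/
def res₂ (a₁ b₁ c₁ a₂ b₂ c₂ : ℤ) : ℤ :=
  (a₁ * c₂ - a₂ * c₁) ^ 2 - 4 * (b₁ * c₂ - b₂ * c₁) * (a₁ * b₂ - a₂ * b₁)

/-- The quantity `D`. -/
def Dconst (g : ℕ) (a b c : Fin g → ℤ) : ℤ :=
  (∏ p ∈ (Finset.range (2 * g + 1)).filter Nat.Prime, (p : ℤ)) *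
    (∏ k, a k * c k * (b k ^ 2 - a k * c k)) *
    ∏ i, ∏ j ∈ Finset.Ioi i, res₂ (a i) (b i) (c i) (a j) (b j) (c j)

/-- `ρ(d₁,…,d_g)`. -/
def rho (g : ℕ) (a b c : Fin g → ℤ) (d : Fin g → ℕ) : ℕ :=
  (((Finset.range (∏ i, d i)) ×ˢ (Finset.range (∏ i, d i))).filter
    (fun x => ∀ i, (d i : ℤ) ∣ qf a b c i ((x.1 : ℤ), (x.2 : ℤ)))).card

/-- `ρ*(d₁,…,d_g)`. -/
def rhostar (g : ℕ) (a b c : Fin g → ℤ) (d : Fin g → ℕ) : ℕ :=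
  (((Finset.range (∏ i, d i)) ×ˢ (Finset.range (∏ i, d i))).filter
    (fun x => (∀ i, (d i : ℤ) ∣ qf a b c i ((x.1 : ℤ), (x.2 : ℤ))) ∧
      Nat.gcd (Nat.gcd x.1 x.2) (∏ i, d i) = 1)).card

/-- `ψ(d₁,…,d_g) = ∏_p p^{⌈max_i v_p(d_i)/2⌉}`. -/
def psi (g : ℕ) (d : Fin g → ℕ) : ℕ :=
  ∏ p ∈ (∏ i, d i).primeFactors,
    p ^ (((Finset.univ.sup fun i => (d i).factorization p) + 1) / 2)

/- ### Auxiliary lemmas -/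

lemma res_bezout₂ (a₁ b₁ c₁ a₂ b₂ c₂ x₁ x₂ : ℤ) :
    res₂ a₁ b₁ c₁ a₂ b₂ c₂ * x₂ ^ 3 =
      ((-2*b₁*a₂^2 + 2*a₁*a₂*b₂) * x₁ + (c₁*a₂^2 - 4*b₁*a₂*b₂ + 4*a₁*b₂^2 - a₁*a₂*c₂) * x₂) *
        (a₁*x₁^2 + 2*b₁*x₁*x₂ + c₁*x₂^2) +
      ((2*a₁*b₁*a₂ - 2*a₁^2*b₂) * x₁ + (4*b₁^2*a₂ - a₁*c₁*a₂ - 4*a₁*b₁*b₂ + a₁^2*c₂) * x₂) *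
        (a₂*x₁^2 + 2*b₂*x₁*x₂ + c₂*x₂^2) := by
  unfold res₂; ring

lemma res_swap_vars (a₁ b₁ c₁ a₂ b₂ c₂ : ℤ) :
    res₂ c₁ b₁ a₁ c₂ b₂ a₂ = res₂ a₁ b₁ c₁ a₂ b₂ c₂ := by unfold res₂; ring

lemma res_symm (a₁ b₁ c₁ a₂ b₂ c₂ : ℤ) :
    res₂ a₂ b₂ c₂ a₁ b₁ c₁ = res₂ a₁ b₁ c₁ a₂ b₂ c₂ := by unfold res₂; ring

/-- If a prime doesn't divide the resolvent but divides both forms' values,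
it divides both coordinates. -/
lemma key_dvd {p : ℤ} (hp : Prime p) {a₁ b₁ c₁ a₂ b₂ c₂ x₁ x₂ : ℤ}
    (hR : ¬ p ∣ res₂ a₁ b₁ c₁ a₂ b₂ c₂)
    (h1 : p ∣ a₁*x₁^2 + 2*b₁*x₁*x₂ + c₁*x₂^2)
    (h2 : p ∣ a₂*x₁^2 + 2*b₂*x₁*x₂ + c₂*x₂^2) : p ∣ x₁ ∧ p ∣ x₂ := by
  have H : ∀ y₁ y₂ A₁ B₁ C₁ A₂ B₂ C₂ : ℤ, ¬ p ∣ res₂ A₁ B₁ C₁ A₂ B₂ C₂ →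
      p ∣ A₁*y₁^2 + 2*B₁*y₁*y₂ + C₁*y₂^2 → p ∣ A₂*y₁^2 + 2*B₂*y₁*y₂ + C₂*y₂^2 → p ∣ y₂ := by
    intro y₁ y₂ A₁ B₁ C₁ A₂ B₂ C₂ hR' h1' h2'
    have : p ∣ res₂ A₁ B₁ C₁ A₂ B₂ C₂ * y₂ ^ 3 := by
      rw [res_bezout₂]
      exact dvd_add (Dvd.dvd.mul_left h1' _) (Dvd.dvd.mul_left h2' _)
    rcases hp.dvd_mul.mp this with h | h
    · exact absurd h hR'
    · exact hp.dvd_of_dvd_pow h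
  refine ⟨?_, H x₁ x₂ _ _ _ _ _ _ hR h1 h2⟩
  have h1' : p ∣ c₁*x₂^2 + 2*b₁*x₂*x₁ + a₁*x₁^2 := by
    have := h1
    rwa [show a₁*x₁^2 + 2*b₁*x₁*x₂ + c₁*x₂^2 = c₁*x₂^2 + 2*b₁*x₂*x₁ + a₁*x₁^2 by ring] at this
  have h2' : p ∣ c₂*x₂^2 + 2*b₂*x₂*x₁ + a₂*x₁^2 := by
    have := h2
    rwa [show a₂*x₁^2 + 2*b₂*x₁*x₂ + c₂*x₂^2 = c₂*x₂^2 + 2*b₂*x₂*x₁ + a₂*x₁^2 by ring] at this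
  exact H x₂ x₁ c₁ b₁ a₁ c₂ b₂ a₂ (by rwa [res_swap_vars]) h1' h2'

/-- Counting multiples of `d` in `range (d*m)`. -/
lemma card_range_filter_dvd (d m : ℕ) (hd : 0 < d) :
    ((Finset.range (d * m)).filter (fun n => d ∣ n)).card = m := by
  have himg : (Finset.range (d * m)).filter (fun n => d ∣ n)
      = (Finset.range m).image (fun j => d * j) := by
    ext n
    simp only [Finset.mem_filter, Finset.mem_range, Finset.mem_image]
    constructor
    · rintro ⟨hlt, j, rfl⟩
      exact ⟨j, lt_of_mul_lt_mul_left hlt (Nat.zero_le d), rfl⟩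
    · rintro ⟨j, hj, rfl⟩
      exact ⟨(Nat.mul_lt_mul_left hd).mpr hj, j, rfl⟩
  rw [himg, Finset.card_image_of_injective _ (fun x y h => Nat.eq_of_mul_eq_mul_left hd h),
    Finset.card_range]

lemma prod_ctOf {g : ℕ} (S : Finset (Fin g)) (p : ℕ) :
    ∏ i : Fin g, (if i ∈ S then p else 1) = p ^ S.card := by
  rw [Finset.prod_ite_mem, Finset.univ_inter, Finset.prod_const]

/-- The value of `ρ` on a tuple supported on a set `S` with at least two elements. -/
lemma rho_ctOf {g : ℕ} (a b c : Fin g → ℤ) {p : ℕ} (hp : p.Prime)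
    (hres : ∀ i j : Fin g, i ≠ j →
      ¬ (p:ℤ) ∣ res₂ (a i) (b i) (c i) (a j) (b j) (c j))
    (S : Finset (Fin g)) (hS : 2 ≤ S.card) :
    rho g a b c (fun i => if i ∈ S then p else 1) = p ^ (S.card - 1) * p ^ (S.card - 1) := by
  obtain ⟨i, hi, j, hj, hij⟩ := Finset.one_lt_card.mp hS
  have hp' : Prime (p:ℤ) := Nat.prime_iff_prime_int.mp hp
  unfold rho
  rw [prod_ctOf]
  have hfil : ((Finset.range (p ^ S.card)) ×ˢ (Finset.range (p ^ S.card))).filter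
      (fun x => ∀ k, (((if k ∈ S then p else 1 : ℕ)) : ℤ) ∣ qf a b c k ((x.1 : ℤ), (x.2 : ℤ)))
      = ((Finset.range (p ^ S.card)) ×ˢ (Finset.range (p ^ S.card))).filter
        (fun x => p ∣ x.1 ∧ p ∣ x.2) := by
    apply Finset.filter_congr
    intro x _
    constructor
    · intro h
      have h1 : (p:ℤ) ∣ qf a b c i ((x.1 : ℤ), (x.2 : ℤ)) := by
        have := h i; rwa [if_pos hi] at this
      have h2 : (p:ℤ) ∣ qf a b c j ((x.1 : ℤ), (x.2 : ℤ)) := by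
        have := h j; rwa [if_pos hj] at this
      have := key_dvd hp' (hres i j hij) h1 h2
      exact ⟨Int.natCast_dvd_natCast.mp this.1, Int.natCast_dvd_natCast.mp this.2⟩
    · rintro ⟨h1, h2⟩ k
      by_cases hk : k ∈ S
      · rw [if_pos hk]
        have h1' : (p:ℤ) ∣ (x.1 : ℤ) := Int.natCast_dvd_natCast.mpr h1
        have h2' : (p:ℤ) ∣ (x.2 : ℤ) := Int.natCast_dvd_natCast.mpr h2
        unfold qf
        refine dvd_add (dvd_add ?_ ?_) ?_
        · exact Dvd.dvd.mul_left (dvd_pow h1' two_ne_zero) _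
        · exact Dvd.dvd.mul_left h2' _
        · exact Dvd.dvd.mul_left (dvd_pow h2' two_ne_zero) _
      · rw [if_neg hk]
        exact one_dvd _
  rw [hfil, Finset.filter_product, Finset.card_product]
  have hcard1 : 1 ≤ S.card := le_trans one_le_two hS
  have hpk : p ^ S.card = p * p ^ (S.card - 1) := by
    conv_lhs => rw [← Nat.sub_add_cancel hcard1]
    rw [pow_succ, mul_comm]
  rw [hpk, card_range_filter_dvd _ _ hp.pos]

/-- evaluation of the Möbius-weighted sum of `ρ(c₁,…,c_g)/(c₁⋯c_g)²`
over tuples with `cᵢ ∣ p` and `p ∣ c₁⋯c_g`. -/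
theorem stmt17 (g : ℕ) (hg : 2 ≤ g) (a b c : Fin g → ℤ)
    (hirr : ∀ i, ¬ IsSquare (b i ^ 2 - a i * c i))
    (hD : Dconst g a b c ≠ 0)
    (p : ℕ) (hp : p.Prime) (hpD : ¬ ((p : ℤ) ∣ Dconst g a b c)) :
    ∑ ct ∈ (Fintype.piFinset fun _ : Fin g => p.divisors).filter
        (fun ct => p ∣ ∏ i, ct i),
      (ArithmeticFunction.moebius p : ℚ) * (∏ i, (ArithmeticFunction.moebius (ct i) : ℚ)) *
        (rho g a b c ct : ℚ) / ((∏ i, ct i : ℕ) : ℚ) ^ 2 =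
      ((∑ i : Fin g, (rho g a b c (fun j => if j = i then p else 1) : ℚ)) + 1 - g) /
        (p : ℚ) ^ 2 := by
  classical
  have hg0 : 0 < g := lt_of_lt_of_le two_pos hg
  haveI : NeZero g := ⟨hg0.ne'⟩
  have hp' : Prime (p:ℤ) := Nat.prime_iff_prime_int.mp hp
  have hp1 : p ≠ 1 := hp.one_lt.ne'
  have hpQ : (p:ℚ) ≠ 0 := by exact_mod_cast hp.pos.ne'
  -- the resolvents are coprime to p
  have hres : ∀ i j : Fin g, i ≠ j →
      ¬ (p:ℤ) ∣ res₂ (a i) (b i) (c i) (a j) (b j) (c j) := by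
    intro i j hij hdvd
    apply hpD
    unfold Dconst
    apply dvd_mul_of_dvd_right
    rcases lt_or_gt_of_ne hij with hlt | hlt
    · exact hdvd.trans ((Finset.dvd_prod_of_mem _ (Finset.mem_Ioi.mpr hlt)).trans
        (Finset.dvd_prod_of_mem (fun i => ∏ j ∈ Finset.Ioi i,
          res₂ (a i) (b i) (c i) (a j) (b j) (c j)) (Finset.mem_univ i)))
    · rw [← res_symm] at hdvd
      exact hdvd.trans ((Finset.dvd_prod_of_mem _ (Finset.mem_Ioi.mpr hlt)).trans
        (Finset.dvd_prod_of_mem (fun j => ∏ i ∈ Finset.Ioi j,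
          res₂ (a j) (b j) (c j) (a i) (b i) (c i)) (Finset.mem_univ j)))
  -- the summand as a function
  set F : (Fin g → ℕ) → ℚ := fun ct =>
    (ArithmeticFunction.moebius p : ℚ) * (∏ i, (ArithmeticFunction.moebius (ct i) : ℚ)) *
      (rho g a b c ct : ℚ) / ((∏ i, ct i : ℕ) : ℚ) ^ 2 with hF
  -- Reindex by nonempty subsets of Fin g
  have hbij : ∑ ct ∈ (Fintype.piFinset fun _ : Fin g => p.divisors).filter
        (fun ct => p ∣ ∏ i, ct i), F ct
      = ∑ S ∈ (Finset.univ.powerset.filter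
          (fun S : Finset (Fin g) => S.Nonempty)),
          F (fun i => if i ∈ S then p else 1) := by
    have hji : ∀ ct ∈ (Fintype.piFinset fun _ : Fin g => p.divisors).filter
        (fun ct => p ∣ ∏ i, ct i),
        (fun i => if i ∈ Finset.univ.filter (fun i => ct i = p) then p else 1) = ct := by
      intro ct hct
      simp only [Finset.mem_filter, Fintype.mem_piFinset, Nat.mem_divisors] at hct
      funext i
      simp only [Finset.mem_filter, Finset.mem_univ, true_and]
      by_cases h : ct i = p
      · rw [if_pos h, h]
      · rw [if_neg h]
        rcases (Nat.dvd_prime hp).mp (hct.1 i).1 with h' | h'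
        · exact h'.symm
        · exact absurd h' h
    refine Finset.sum_nbij' (i := fun ct => Finset.univ.filter (fun i => ct i = p))
      (j := fun S i => if i ∈ S then p else 1) ?_ ?_ ?_ ?_ ?_
    · intro ct hct
      simp only [Finset.mem_filter, Fintype.mem_piFinset, Nat.mem_divisors] at hct
      simp only [Finset.mem_filter, Finset.mem_powerset]
      refine ⟨Finset.subset_univ _, ?_⟩
      by_contra hne
      rw [Finset.not_nonempty_iff_eq_empty, Finset.filter_eq_empty_iff] at hne
      have hall : ∀ i, ct i = 1 := by
        intro i
        rcases (Nat.dvd_prime hp).mp (hct.1 i).1 with h | h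
        · exact h
        · exact absurd h (hne (Finset.mem_univ i))
      have : ∏ i, ct i = 1 := Finset.prod_eq_one fun i _ => hall i
      rw [this] at hct
      exact hp1 (Nat.dvd_one.mp hct.2)
    · intro S hS
      simp only [Finset.mem_filter, Finset.mem_powerset] at hS
      simp only [Finset.mem_filter, Fintype.mem_piFinset, Nat.mem_divisors]
      constructor
      · intro i
        by_cases hi : i ∈ S <;> simp [hi, hp.ne_zero]
      · obtain ⟨i, hi⟩ := hS.2
        calc p ∣ (if i ∈ S then p else 1) := by rw [if_pos hi]
          _ ∣ ∏ k, (if k ∈ S then p else 1) := Finset.dvd_prod_of_mem _ (Finset.mem_univ i)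
    · intro ct hct
      exact hji ct hct
    · intro S hS
      ext i
      simp only [Finset.mem_filter, Finset.mem_univ, true_and]
      by_cases hi : i ∈ S
      · simp [hi]
      · simp [hi, Ne.symm hp1]
    · intro ct hct
      exact (congrArg F (hji ct hct)).symm
  rw [hbij]
  -- Split according to card S = 1 or not
  set T := (Finset.univ.powerset.filter (fun S : Finset (Fin g) => S.Nonempty)) with hT
  set G : Finset (Fin g) → ℚ := fun S => F (fun i => if i ∈ S then p else 1) with hG
  rw [← Finset.sum_filter_add_sum_filter_not T (fun S => S.card = 1) G]
  -- description of the card-one part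
  have hT1 : T.filter (fun S => S.card = 1)
      = Finset.univ.image (fun i : Fin g => ({i} : Finset (Fin g))) := by
    ext S
    simp only [hT, Finset.mem_filter, Finset.mem_powerset, Finset.mem_image, Finset.mem_univ,
      true_and]
    constructor
    · rintro ⟨⟨-, -⟩, h1⟩
      obtain ⟨i, rfl⟩ := Finset.card_eq_one.mp h1
      exact ⟨i, rfl⟩
    · rintro ⟨i, rfl⟩
      exact ⟨⟨Finset.subset_univ _, ⟨i, Finset.mem_singleton_self i⟩⟩, Finset.card_singleton i⟩
  have hmoeb : ∀ S : Finset (Fin g),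
      (∏ i, ((ArithmeticFunction.moebius (if i ∈ S then p else 1)) : ℚ)) = (-1) ^ S.card := by
    intro S
    have : ∀ i : Fin g, ((ArithmeticFunction.moebius (if i ∈ S then p else 1)) : ℚ)
        = if i ∈ S then (-1 : ℚ) else 1 := by
      intro i
      by_cases hi : i ∈ S <;>
        simp [hi, ArithmeticFunction.moebius_apply_prime hp, ArithmeticFunction.moebius_apply_one]
    rw [Finset.prod_congr rfl fun i _ => this i, Finset.prod_ite_mem, Finset.univ_inter,
      Finset.prod_const]
  have hmp : ((ArithmeticFunction.moebius p : ℤ) : ℚ) = -1 := by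
    rw [ArithmeticFunction.moebius_apply_prime hp]; norm_num
  -- card-one sum
  have hpart1 : ∑ S ∈ T.filter (fun S => S.card = 1), G S
      = (∑ i : Fin g, (rho g a b c (fun j => if j = i then p else 1) : ℚ)) / (p:ℚ) ^ 2 := by
    rw [hT1, Finset.sum_image (fun i _ j _ h => Finset.singleton_injective h), Finset.sum_div]
    apply Finset.sum_congr rfl
    intro i _
    have hfun : (fun j => if j ∈ ({i} : Finset (Fin g)) then p else 1)
        = (fun j => if j = i then p else 1) := by
      funext j; simp [Finset.mem_singleton]
    simp only [hG, hF, hfun, hmoeb, hmp]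
    rw [Finset.prod_ite_eq' Finset.univ i (fun _ => p), if_pos (Finset.mem_univ i),
      Finset.card_singleton]
    ring
  -- the card ≥ 2 part
  have hval : ∀ S ∈ T.filter (fun S => ¬ S.card = 1),
      G S = (-1) ^ (S.card + 1) * ((p:ℚ) ^ 2)⁻¹ := by
    intro S hS
    simp only [hT, Finset.mem_filter, Finset.mem_powerset] at hS
    have hS2 : 2 ≤ S.card := by
      rcases hS with ⟨⟨-, hne⟩, hc1⟩
      have := Finset.card_pos.mpr hne
      omega
    simp only [hG, hF]
    rw [hmoeb, hmp, prod_ctOf, rho_ctOf a b c hp hres S hS2]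
    obtain ⟨m, hm⟩ := Nat.exists_eq_add_of_le hS2
    rw [hm]
    have h1 : 2 + m - 1 = 1 + m := by omega
    rw [h1]
    push_cast
    rw [div_eq_mul_inv]
    have hppow : ((p:ℚ) ^ (2 + m)) ^ 2 ≠ 0 := pow_ne_zero _ (pow_ne_zero _ hpQ)
    field_simp
    ring
  have hsum0 : ∑ S ∈ (Finset.univ : Finset (Fin g)).powerset, (-1:ℚ) ^ S.card = 0 := by
    have h := Finset.sum_powerset_neg_one_pow_card (x := (Finset.univ : Finset (Fin g)))
    rw [if_neg (Finset.univ_nonempty.ne_empty)] at h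
    exact_mod_cast h
  have hsplit0 : ∑ S ∈ (Finset.univ : Finset (Fin g)).powerset, (-1:ℚ) ^ S.card
      = (∑ S ∈ T, (-1:ℚ) ^ S.card) + 1 := by
    rw [← Finset.sum_filter_add_sum_filter_not (Finset.univ : Finset (Fin g)).powerset
      (fun S => S.Nonempty) (fun S => (-1:ℚ) ^ S.card)]
    congr 1
    have : (Finset.univ : Finset (Fin g)).powerset.filter (fun S => ¬ S.Nonempty)
        = {∅} := by
      ext S
      simp [Finset.not_nonempty_iff_eq_empty, Finset.empty_subset]
    rw [this, Finset.sum_singleton, Finset.card_empty, pow_zero]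
  have hsumT1 : ∑ S ∈ T.filter (fun S => S.card = 1), (-1:ℚ) ^ S.card = -g := by
    rw [hT1, Finset.sum_image (fun i _ j _ h => Finset.singleton_injective h)]
    simp [Finset.card_singleton]
  have hsumT2 : ∑ S ∈ T.filter (fun S => ¬ S.card = 1), (-1:ℚ) ^ (S.card + 1) = 1 - g := by
    have hTsplit : ∑ S ∈ T, (-1:ℚ) ^ S.card
        = (∑ S ∈ T.filter (fun S => S.card = 1), (-1:ℚ) ^ S.card)
          + ∑ S ∈ T.filter (fun S => ¬ S.card = 1), (-1:ℚ) ^ S.card := by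
      rw [Finset.sum_filter_add_sum_filter_not]
    have h2 : ∑ S ∈ T.filter (fun S => ¬ S.card = 1), (-1:ℚ) ^ S.card = g - 1 := by
      have h := hsplit0
      rw [hsum0, hTsplit, hsumT1] at h
      linarith
    calc ∑ S ∈ T.filter (fun S => ¬ S.card = 1), (-1:ℚ) ^ (S.card + 1)
        = ∑ S ∈ T.filter (fun S => ¬ S.card = 1), (-1:ℚ) ^ S.card * (-1) := by
          apply Finset.sum_congr rfl; intro S _; rw [pow_succ]
      _ = (∑ S ∈ T.filter (fun S => ¬ S.card = 1), (-1:ℚ) ^ S.card) * (-1) := by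
          rw [Finset.sum_mul]
      _ = ((g:ℚ) - 1) * (-1) := by rw [h2]
      _ = 1 - g := by ring
  have hpart2 : ∑ S ∈ T.filter (fun S => ¬ S.card = 1), G S = (1 - (g:ℚ)) / (p:ℚ) ^ 2 := by
    rw [Finset.sum_congr rfl hval, ← Finset.sum_mul, hsumT2, div_eq_mul_inv]
  rw [hpart1, hpart2, ← add_div, add_sub_assoc]
end

section
/- Assume D ≠ 0 and let p be a prime with p ∤ D; for such p define ω(p) := (ρ(p,1,…,1) + ρ(1,p,1,…,1) + ⋯ + ρ(1,…,1,p) + 1 − g)/p. Then ω(p) = g + Σ_{n=1}^g (δ_n/p) − (1/p)·(g − 1 + Σ_{n=1}^g (δ_n/p)), where (δ_n/p) is the Legendre symbol, and moreover 0 ≤ ω(p) < p. -/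
open Finset

section CountingLemmas

open Finset

variable {F : Type*} [Field F] [Fintype F] [DecidableEq F]

private lemma count_inner (hF : ringChar F ≠ 2) (A B C : F) (hA : A ≠ 0) (y : F) :
    (((univ : Finset F).filter fun x => A*x^2 + 2*B*x*y + C*y^2 = 0).card : ℤ)
      = quadraticChar F (4*y^2*(B^2 - A*C)) + 1 := by
  have h2 : (2 : F) ≠ 0 := Ring.two_ne_zero hF
  have h2A : (2*A) ≠ 0 := mul_ne_zero h2 hA
  have h4A : (4*A) ≠ 0 := mul_ne_zero (by
    have h4 : (4:F) = 2*2 := by norm_num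
    rw [h4]; exact mul_ne_zero h2 h2) hA
  have key : ((univ : Finset F).filter fun x => A*x^2 + 2*B*x*y + C*y^2 = 0).card
      = ((univ : Finset F).filter fun u => u^2 = 4*y^2*(B^2 - A*C)).card := by
    apply Finset.card_bij (fun x _ => 2*A*x + 2*B*y)
    · intro x hx
      simp only [mem_filter, mem_univ, true_and] at hx ⊢
      have h : (2*A*x + 2*B*y)^2 - 4*y^2*(B^2-A*C) = 4*A*(A*x^2 + 2*B*x*y + C*y^2) := by ring
      rw [← sub_eq_zero, h, hx, mul_zero]
    · intro x hx x' hx' h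
      exact mul_left_cancel₀ h2A (add_right_cancel h)
    · intro u hu
      simp only [mem_filter, mem_univ, true_and] at hu
      refine ⟨(u - 2*B*y) / (2*A), ?_, ?_⟩
      · simp only [mem_filter, mem_univ, true_and]
        have hx : 2*A*((u - 2*B*y)/(2*A)) + 2*B*y = u := by field_simp; ring
        have h : 4*A*(A*((u - 2*B*y)/(2*A))^2 + 2*B*((u - 2*B*y)/(2*A))*y + C*y^2)
            = (2*A*((u - 2*B*y)/(2*A)) + 2*B*y)^2 - 4*y^2*(B^2-A*C) := by ring
        rw [hx, hu, sub_self] at h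
        exact (mul_eq_zero.mp h).resolve_left h4A
      · field_simp; ring
  rw [key]
  have h := quadraticChar_card_sqrts hF (4*y^2*(B^2 - A*C))
  rw [← h]
  congr 1
  rw [Set.toFinset_setOf]

private lemma count_conic (hF : ringChar F ≠ 2) (A B C : F) (hA : A ≠ 0)
    (hDelta : B^2 - A*C ≠ 0) :
    (((univ : Finset (F × F)).filter fun v => A*v.1^2 + 2*B*v.1*v.2 + C*v.2^2 = 0).card : ℤ)
      = Fintype.card F + quadraticChar F (B^2 - A*C) * (Fintype.card F - 1) := by
  have h2 : (2 : F) ≠ 0 := Ring.two_ne_zero hF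
  have hsplit : ((univ : Finset (F × F)).filter fun v => A*v.1^2 + 2*B*v.1*v.2 + C*v.2^2 = 0).card
      = ∑ y : F, ((univ : Finset F).filter fun x => A*x^2 + 2*B*x*y + C*y^2 = 0).card := by
    rw [Finset.card_filter, Fintype.sum_prod_type, Finset.sum_comm]
    exact Finset.sum_congr rfl (fun y _ => (Finset.card_filter _ _).symm)
  rw [hsplit]
  push_cast
  have heach : ∀ y : F, (((univ : Finset F).filter fun x => A*x^2 + 2*B*x*y + C*y^2 = 0).card : ℤ)
      = quadraticChar F (4*y^2*(B^2 - A*C)) + 1 := count_inner hF A B C hA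
  simp_rw [heach]
  rw [Finset.sum_add_distrib]
  have hchar : ∀ y : F, (quadraticChar F (4*y^2*(B^2 - A*C)) : ℤ)
      = (if y = 0 then 0 else 1) * quadraticChar F (B^2 - A*C) := by
    intro y
    have h4 : (4:F)*y^2*(B^2-A*C) = (2*y)^2 * (B^2-A*C) := by ring
    rw [h4, map_mul]
    by_cases hy : y = 0
    · simp [hy]
    · rw [quadraticChar_sq_one' (mul_ne_zero h2 hy), if_neg hy]
  simp_rw [hchar]
  rw [← Finset.sum_mul]
  have hind : (∑ y : F, (if y = 0 then (0:ℤ) else 1)) = (Fintype.card F : ℤ) - 1 := by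
    have h : ∀ y : F, (if y = 0 then (0:ℤ) else 1) = 1 - (if y = 0 then 1 else 0) := by
      intro y; split <;> ring
    simp_rw [h]
    rw [Finset.sum_sub_distrib, Finset.sum_const, Finset.sum_ite_eq' univ (0:F) (fun _ => (1:ℤ))]
    simp [Finset.card_univ]
  rw [hind, Finset.sum_const, Finset.card_univ]
  push_cast
  ring

end CountingLemmas

private lemma rho_single {g : ℕ} (a b c : Fin g → ℤ) (i : Fin g) (p : ℕ) [hfp : Fact p.Prime]
    (hp2 : p ≠ 2) (hpa : ¬ ((p:ℤ) ∣ a i)) (hpd : ¬ ((p:ℤ) ∣ (b i ^ 2 - a i * c i))) :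
    (rho g a b c (fun j => if j = i then p else 1) : ℤ)
      = p + legendreSym p (b i ^ 2 - a i * c i) * (p - 1) := by
  haveI : NeZero p := ⟨hfp.out.ne_zero⟩
  have hF : ringChar (ZMod p) ≠ 2 := by rw [ZMod.ringChar_zmod_n]; exact hp2
  have hprod : (∏ j : Fin g, (if j = i then p else 1)) = p :=
    Fintype.prod_ite_eq' i (fun _ => p)
  have hA : ((a i : ZMod p)) ≠ 0 := by
    rw [Ne, ZMod.intCast_zmod_eq_zero_iff_dvd]; exact hpa
  have hDelta : ((b i : ZMod p))^2 - (a i : ZMod p) * (c i : ZMod p) ≠ 0 := by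
    intro h
    apply hpd
    rw [← ZMod.intCast_zmod_eq_zero_iff_dvd]
    push_cast
    exact h
  have hcount := count_conic hF (a i : ZMod p) (b i : ZMod p) (c i : ZMod p) hA hDelta
  have hcard : rho g a b c (fun j => if j = i then p else 1)
      = ((univ : Finset (ZMod p × ZMod p)).filter fun v =>
          (a i : ZMod p)*v.1^2 + 2*(b i : ZMod p)*v.1*v.2 + (c i : ZMod p)*v.2^2 = 0).card := by
    unfold rho
    rw [hprod]
    have hpred : ∀ x : ℕ × ℕ,
        ((∀ j, (((if j = i then p else 1 : ℕ)) : ℤ) ∣ qf a b c j ((x.1:ℤ),(x.2:ℤ)))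
          ↔ (a i : ZMod p)*(x.1 : ZMod p)^2 + 2*(b i : ZMod p)*(x.1 : ZMod p)*(x.2 : ZMod p)
              + (c i : ZMod p)*(x.2 : ZMod p)^2 = 0) := by
      intro x
      have hq : ((qf a b c i ((x.1:ℤ),(x.2:ℤ)) : ℤ) : ZMod p)
          = (a i : ZMod p)*(x.1 : ZMod p)^2 + 2*(b i : ZMod p)*(x.1 : ZMod p)*(x.2 : ZMod p)
              + (c i : ZMod p)*(x.2 : ZMod p)^2 := by
        unfold qf; push_cast; ring
      constructor
      · intro h
        have := h i
        rw [if_pos rfl] at this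
        rw [← hq, ZMod.intCast_zmod_eq_zero_iff_dvd]
        exact this
      · intro h j
        by_cases hj : j = i
        · subst hj
          rw [if_pos rfl, ← ZMod.intCast_zmod_eq_zero_iff_dvd, hq]
          exact h
        · rw [if_neg hj]
          exact one_dvd _
    rw [Finset.filter_congr (fun x _ => hpred x)]
    apply Finset.card_nbij' (fun x => ((x.1 : ZMod p), (x.2 : ZMod p)))
      (fun v => (v.1.val, v.2.val))
    · intro x _
      simp only [mem_coe, mem_filter, mem_univ, true_and, mem_product, mem_range] at *
      tauto
    · intro v hv
      simp only [mem_coe, mem_filter, mem_univ, true_and, mem_product, mem_range] at *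
      refine ⟨⟨ZMod.val_lt _, ZMod.val_lt _⟩, ?_⟩
      rwa [ZMod.natCast_rightInverse v.1, ZMod.natCast_rightInverse v.2]
    · intro x hx
      simp only [mem_coe, mem_filter, mem_product, mem_range] at hx
      simp [ZMod.val_cast_of_lt hx.1.1, ZMod.val_cast_of_lt hx.1.2]
    · intro v _
      simp [ZMod.natCast_rightInverse v.1, ZMod.natCast_rightInverse v.2]
  rw [hcard, hcount, ZMod.card]
  congr 2
  rw [legendreSym]
  congr 1
  push_cast
  ring

/-- the formula for `ω(p)` in terms of Legendre symbols, and the bounds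
`0 ≤ ω(p) < p`, for `p ∤ D`. -/
theorem stmt18 (g : ℕ) (hg : 2 ≤ g) (a b c : Fin g → ℤ)
    (hirr : ∀ i, ¬ IsSquare (b i ^ 2 - a i * c i))
    (hD : Dconst g a b c ≠ 0)
    (p : ℕ) (hp : p.Prime) (hpD : ¬ ((p : ℤ) ∣ Dconst g a b c))
    (w : ℚ)
    (hw : w = ((∑ i : Fin g, (rho g a b c (fun j => if j = i then p else 1) : ℚ)) +
      1 - g) / (p : ℚ)) :
    w = g + (∑ n : Fin g, (@legendreSym p ⟨hp⟩ (b n ^ 2 - a n * c n) : ℚ)) -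
        (1 / (p : ℚ)) *
          ((g : ℚ) - 1 + ∑ n : Fin g, (@legendreSym p ⟨hp⟩ (b n ^ 2 - a n * c n) : ℚ)) ∧
      0 ≤ w ∧ w < p := by
  haveI hfp : Fact p.Prime := ⟨hp⟩
  have hP1 : ¬ ((p:ℤ) ∣ ∏ q ∈ (Finset.range (2 * g + 1)).filter Nat.Prime, (q : ℤ)) := by
    intro h
    exact hpD (dvd_mul_of_dvd_left (dvd_mul_of_dvd_left h _) _)
  have hP2 : ∀ k, ¬ ((p:ℤ) ∣ a k * c k * (b k ^ 2 - a k * c k)) := by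
    intro k hk
    apply hpD
    have h1 : a k * c k * (b k ^ 2 - a k * c k)
        ∣ ∏ m, a m * c m * (b m ^ 2 - a m * c m) :=
      Finset.dvd_prod_of_mem (fun m => a m * c m * (b m ^ 2 - a m * c m)) (mem_univ k)
    exact dvd_mul_of_dvd_left (dvd_mul_of_dvd_right (hk.trans h1) _) _
  have hpa : ∀ k, ¬ ((p:ℤ) ∣ a k) := fun k h =>
    hP2 k (dvd_mul_of_dvd_left (dvd_mul_of_dvd_left h _) _)
  have hpd : ∀ k, ¬ ((p:ℤ) ∣ (b k ^ 2 - a k * c k)) := fun k h =>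
    hP2 k (Dvd.dvd.mul_left h _)
  have hp2g : 2 * g < p := by
    by_contra hle
    push_neg at hle
    have hmem : p ∈ (Finset.range (2 * g + 1)).filter Nat.Prime :=
      Finset.mem_filter.mpr ⟨Finset.mem_range.mpr (by omega), hp⟩
    exact hP1 (Finset.dvd_prod_of_mem (fun q : ℕ => (q : ℤ)) hmem)
  have hp2 : p ≠ 2 := by omega
  have hρ : ∀ i : Fin g, (rho g a b c (fun j => if j = i then p else 1) : ℚ)
      = p + (legendreSym p (b i ^ 2 - a i * c i) : ℚ) * (p - 1) := by
    intro i
    exact_mod_cast congrArg (fun z : ℤ => (z : ℚ)) (rho_single a b c i p hp2 (hpa i) (hpd i))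
  have hε : ∀ n : Fin g, (legendreSym p (b n ^ 2 - a n * c n) : ℚ) = 1 ∨
      (legendreSym p (b n ^ 2 - a n * c n) : ℚ) = -1 := by
    intro n
    have hz : (((b n ^ 2 - a n * c n : ℤ)) : ZMod p) ≠ 0 := by
      rw [Ne, ZMod.intCast_zmod_eq_zero_iff_dvd]
      exact hpd n
    rcases legendreSym.eq_one_or_neg_one p hz with h | h
    · left; exact_mod_cast congrArg (fun z : ℤ => (z : ℚ)) h
    · right; rw [h]; norm_num
  set S : ℚ := ∑ n : Fin g, (legendreSym p (b n ^ 2 - a n * c n) : ℚ) with hSdef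
  have hSub : S ≤ g := by
    rw [hSdef]
    calc ∑ n : Fin g, (legendreSym p (b n ^ 2 - a n * c n) : ℚ)
        ≤ ∑ _n : Fin g, (1:ℚ) := Finset.sum_le_sum (fun n _ => by rcases hε n with h | h <;> rw [h] <;> norm_num)
      _ = g := by simp
  have hSlb : -(g:ℚ) ≤ S := by
    rw [hSdef]
    calc -(g:ℚ) = ∑ _n : Fin g, (-1:ℚ) := by simp
      _ ≤ ∑ n : Fin g, (legendreSym p (b n ^ 2 - a n * c n) : ℚ) :=
          Finset.sum_le_sum (fun n _ => by rcases hε n with h | h <;> rw [h] <;> norm_num)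
  have hsum : (∑ i : Fin g, (rho g a b c (fun j => if j = i then p else 1) : ℚ))
      = g * p + S * (p - 1) := by
    rw [Finset.sum_congr rfl (fun i _ => hρ i), Finset.sum_add_distrib, Finset.sum_const,
      ← Finset.sum_mul]
    simp [Finset.card_univ, nsmul_eq_mul, hSdef]
  have hp0 : (0:ℚ) < p := by exact_mod_cast hp.pos
  have hp0' : (p:ℚ) ≠ 0 := ne_of_gt hp0
  have hgQ : (2:ℚ) ≤ g := by exact_mod_cast hg
  have hp2gQ : 2 * (g:ℚ) < p := by exact_mod_cast hp2g
  have hwval : w = (g * p + S * (p - 1) + 1 - g) / p := by rw [hw, hsum]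
  refine ⟨?_, ?_, ?_⟩
  · rw [hwval]
    field_simp
    ring
  · rw [hwval]
    apply div_nonneg _ (le_of_lt hp0)
    have hpm1 : (0:ℚ) ≤ p - 1 := by nlinarith
    have h1 : -(g:ℚ) * (p - 1) ≤ S * (p - 1) := mul_le_mul_of_nonneg_right hSlb hpm1
    nlinarith
  · rw [hwval, div_lt_iff₀ hp0]
    have hpm1 : (0:ℚ) ≤ p - 1 := by nlinarith
    have h1 : S * (p - 1) ≤ (g:ℚ) * (p - 1) := mul_le_mul_of_nonneg_right hSub hpm1
    nlinarith
end
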